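/- For positive semidefinite matrices B, C and s > 0, Tr(C (B + sI)⁻¹ C (B + C + sI)⁻¹) ≤ s⁻¹ Tr(C² (C + sI)⁻¹). -/

import Mathlib

open Matrix ComplexOrder

lemma aux_diag_nonneg {n : Type*} [Fintype n] [DecidableEq n] {A : Matrix n n ℂ}
    (hA : A.PosSemidef) (i : n) : 0 ≤ A i i := by
  exact hA.diag_nonneg

lemma aux_trace_nonneg {n : Type*} [Fintype n] [DecidableEq n] {A : Matrix n n ℂ}
    (hA : A.PosSemidef) : 0 ≤ A.trace := by
  rw [Matrix.trace]
  exact Finset.sum_nonneg fun i _ => aux_diag_nonneg hA i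

open scoped MatrixOrder in
lemma aux_trace_mul_nonneg {n : Type*} [Fintype n] [DecidableEq n] {A M : Matrix n n ℂ}
    (hA : A.PosSemidef) (hM : M.PosSemidef) : 0 ≤ (A * M).trace := by
  have h1 : A * M = CFC.sqrt A * (CFC.sqrt A * M) := by
    rw [← mul_assoc, CFC.sqrt_mul_sqrt_self A hA.nonneg]
  rw [h1, Matrix.trace_mul_comm, mul_assoc]
  have h2 : (CFC.sqrt A * M * CFC.sqrt A).PosSemidef := by
    have := hM.conjTranspose_mul_mul_same (CFC.sqrt A)
    rwa [(CFC.sqrt_nonneg A).posSemidef.isHermitian.eq] at this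
  exact aux_trace_nonneg (by rwa [mul_assoc] at h2)

lemma aux_smul_psd {n : Type*} [Fintype n] [DecidableEq n] {A : Matrix n n ℂ}
    (hA : A.PosSemidef) {c : ℂ} (hc : 0 ≤ c) : (c • A).PosSemidef := by
  constructor
  · unfold Matrix.IsHermitian
    rw [Matrix.conjTranspose_smul, hA.1]
    congr 1
    have him : c.im = 0 := by
      have := Complex.le_def.mp hc
      simpa using this.2.symm
    exact Complex.conj_eq_iff_im.mpr him
  · exact (hA.smul hc).2

theorem stmt_13 {n : Type*} [Fintype n] [DecidableEq n] (s : ℝ) (hs : 0 < s)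
    (B C : Matrix n n ℂ) (hB : B.PosSemidef) (hC : C.PosSemidef) :
    Matrix.trace (C * (B + s • (1 : Matrix n n ℂ))⁻¹ * C *
        (B + C + s • (1 : Matrix n n ℂ))⁻¹) ≤
      (s : ℂ)⁻¹ * Matrix.trace (C ^ 2 * (C + s • (1 : Matrix n n ℂ))⁻¹) := by
  have hs1 : s • (1 : Matrix n n ℂ) = (s : ℂ) • 1 := by
    ext i j; simp [Complex.real_smul]
  rw [hs1]
  set t : ℂ := (s : ℂ) with ht_def
  have ht : 0 < t := by simpa [ht_def] using Complex.zero_lt_real.mpr hs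
  have ht0 : t ≠ 0 := ht.ne'
  have htinv : 0 ≤ t⁻¹ := by
    rw [ht_def, ← Complex.ofReal_inv]
    exact Complex.zero_le_real.mpr (inv_nonneg.mpr hs.le)
  have h1pd : (t • (1 : Matrix n n ℂ)).PosDef := by
    have h : t • (1 : Matrix n n ℂ) = Matrix.diagonal (fun _ => t) := by
      ext i j; by_cases h : i = j <;> simp [h, Matrix.one_apply]
    rw [h]
    exact Matrix.posDef_diagonal_iff.mpr fun _ => ht
  set Z := B + t • (1 : Matrix n n ℂ) with hZdef
  set Y := B + C + t • (1 : Matrix n n ℂ) with hYdef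
  set X := C + t • (1 : Matrix n n ℂ) with hXdef
  have hZ : Z.PosDef := Matrix.PosDef.posSemidef_add hB h1pd
  have hY : Y.PosDef := Matrix.PosDef.posSemidef_add (hB.add hC) h1pd
  have hX : X.PosDef := Matrix.PosDef.posSemidef_add hC h1pd
  have hZi : Z * Z⁻¹ = 1 := Matrix.mul_nonsing_inv Z (isUnit_iff_ne_zero.mpr hZ.det_pos.ne')
  have hZi' : Z⁻¹ * Z = 1 := Matrix.nonsing_inv_mul Z (isUnit_iff_ne_zero.mpr hZ.det_pos.ne')
  have hYi' : Y⁻¹ * Y = 1 := Matrix.nonsing_inv_mul Y (isUnit_iff_ne_zero.mpr hY.det_pos.ne')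
  have hXi : X * X⁻¹ = 1 := Matrix.mul_nonsing_inv X (isUnit_iff_ne_zero.mpr hX.det_pos.ne')
  have hXi' : X⁻¹ * X = 1 := Matrix.nonsing_inv_mul X (isUnit_iff_ne_zero.mpr hX.det_pos.ne')
  have hYiY : Y * Y⁻¹ = 1 := Matrix.mul_nonsing_inv Y (isUnit_iff_ne_zero.mpr hY.det_pos.ne')
  have hZinv : (Z⁻¹).PosSemidef := hZ.posSemidef.inv
  have hYinv : (Y⁻¹).PosSemidef := hY.posSemidef.inv
  have hXinv : (X⁻¹).PosSemidef := hX.posSemidef.inv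
  -- identity 1
  have key1 : t⁻¹ • (1 : Matrix n n ℂ) - Z⁻¹ = t⁻¹ • (Z⁻¹ * (B * B + t • B) * Z⁻¹) := by
    have hBZ : B * B + t • B = B * Z := by
      rw [hZdef, mul_add, Matrix.mul_smul, mul_one]
    have hBz : B = Z - t • 1 := by rw [hZdef]; abel
    rw [hBZ, ← mul_assoc, mul_assoc (Z⁻¹ * B) Z Z⁻¹, hZi, mul_one]
    rw [hBz, mul_sub, hZi', Matrix.mul_smul, mul_one, smul_sub, smul_smul,
      inv_mul_cancel₀ ht0, one_smul]
  -- D1 is PSD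
  have hW1 : (B * B + t • B).PosSemidef := by
    have hBB : (B * B).PosSemidef := by
      have := Matrix.posSemidef_conjTranspose_mul_self B
      rwa [hB.1] at this
    exact hBB.add (aux_smul_psd hB ht.le)
  have hD1 : (t⁻¹ • C ^ 2 - C * Z⁻¹ * C).PosSemidef := by
    have hEq : t⁻¹ • C ^ 2 - C * Z⁻¹ * C = C * (t⁻¹ • (1 : Matrix n n ℂ) - Z⁻¹) * C := by
      rw [mul_sub, sub_mul, Matrix.mul_smul, Matrix.smul_mul, mul_one, pow_two]
    rw [hEq, key1]
    have hM : (Z⁻¹ * (B * B + t • B) * Z⁻¹).PosSemidef := by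
      have := hW1.conjTranspose_mul_mul_same (Z⁻¹)
      rwa [hZinv.1] at this
    have hCMC : (C * (Z⁻¹ * (B * B + t • B) * Z⁻¹) * C).PosSemidef := by
      have := hM.conjTranspose_mul_mul_same C
      rwa [hC.1] at this
    rw [Matrix.mul_smul, Matrix.smul_mul]
    exact aux_smul_psd hCMC htinv
  -- identity 2
  have hXB : X + B = Y := by rw [hXdef, hYdef]; abel
  have key2 : X⁻¹ - Y⁻¹ = Y⁻¹ * (B + B * X⁻¹ * B) * Y⁻¹ := by
    have h1 : B + B * X⁻¹ * B = Y * X⁻¹ * B := by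
      rw [← hXB, add_mul, add_mul, hXi, one_mul]
    rw [h1, ← mul_assoc, ← mul_assoc, hYi', one_mul, mul_assoc]
    have hYX : B * Y⁻¹ = (Y - X) * Y⁻¹ := by
      rw [show Y - X = B by rw [hXdef, hYdef]; abel]
    rw [hYX, sub_mul, hYiY, mul_sub, mul_one, ← mul_assoc, hXi', one_mul]
  have hD2 : (X⁻¹ - Y⁻¹).PosSemidef := by
    rw [key2]
    have hW2 : (B + B * X⁻¹ * B).PosSemidef := by
      refine hB.add ?_
      have := hXinv.conjTranspose_mul_mul_same B
      rwa [hB.1] at this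
    have := hW2.conjTranspose_mul_mul_same (Y⁻¹)
    rwa [hYinv.1] at this
  -- step 1
  have step1 : Matrix.trace (C * Z⁻¹ * C * Y⁻¹) ≤ t⁻¹ * Matrix.trace (C ^ 2 * Y⁻¹) := by
    have h0 := aux_trace_mul_nonneg hD1 hYinv
    rw [sub_mul, Matrix.smul_mul, Matrix.trace_sub, Matrix.trace_smul, smul_eq_mul] at h0
    exact sub_nonneg.mp h0
  -- step 2
  have step2 : Matrix.trace (C ^ 2 * Y⁻¹) ≤ Matrix.trace (C ^ 2 * X⁻¹) := by
    have h0 := aux_trace_mul_nonneg (hC.pow 2) hD2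
    rw [mul_sub, Matrix.trace_sub] at h0
    exact sub_nonneg.mp h0
  exact step1.trans (mul_le_mul_of_nonneg_left step2 htinv)
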